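/- Let N ≥ 2. Then: (i) Δ ⊆ B_1, i.e., every ω in the standard simplex satisfies ‖ω − b_{[N]}‖² ≤ 1 − 1/N; (ii) B_N = {b_{[N]}}; and (iii) B_{N−1} ⊆ Δ, i.e., every ω ∈ Π with ‖ω − b_{[N]}‖² ≤ 1/(N−1) − 1/N has all coordinates nonnegative. -/

import Mathlib

open Finset

lemma expand_sum (N : ℕ) (hN : 2 ≤ N) (ω : Fin N → ℝ) (hsum : ∑ i, ω i = 1) :
    ∑ i, (ω i - 1 / (N : ℝ)) ^ 2 = (∑ i, (ω i) ^ 2) - 1 / N := by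
  have hN0 : (N : ℝ) ≠ 0 := by positivity
  have : ∑ i, (ω i - 1 / (N : ℝ)) ^ 2
      = ∑ i, ((ω i) ^ 2 - 2 / N * ω i + 1 / N ^ 2) := by
    apply Finset.sum_congr rfl; intro i _; ring
  rw [this, Finset.sum_add_distrib, Finset.sum_sub_distrib, ← Finset.mul_sum, hsum,
    Finset.sum_const, Finset.card_univ, Fintype.card_fin, nsmul_eq_mul]
  field_simp
  ring

/-- For `N ≥ 2`:
(i) `Δ ⊆ B_1`: every `ω` in the standard simplex satisfies
    `‖ω - b_{[N]}‖² ≤ 1 - 1/N`;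
(ii) `B_N = {b_{[N]}}`;
(iii) `B_{N-1} ⊆ Δ`: every `ω ∈ Π` with `‖ω - b_{[N]}‖² ≤ 1/(N-1) - 1/N`
    has all coordinates nonnegative. -/
theorem emp_extreme_balls (N : ℕ) (hN : 2 ≤ N) :
    (∀ ω : Fin N → ℝ, (∀ i, 0 ≤ ω i) → (∑ i, ω i = 1) →
      ∑ i, (ω i - 1 / (N : ℝ)) ^ 2 ≤ 1 - 1 / (N : ℝ)) ∧
    ({ω : Fin N → ℝ | (∑ i, ω i = 1) ∧
        ∑ i, (ω i - 1 / (N : ℝ)) ^ 2 ≤ 1 / (N : ℝ) - 1 / N} =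
      {fun _ : Fin N => (1 : ℝ) / N}) ∧
    (∀ ω : Fin N → ℝ, (∑ i, ω i = 1) →
      (∑ i, (ω i - 1 / (N : ℝ)) ^ 2 ≤ 1 / ((N : ℝ) - 1) - 1 / N) →
      ∀ i, 0 ≤ ω i) := by
  have hN0 : (N : ℝ) ≠ 0 := by positivity
  have hN2 : (2 : ℝ) ≤ (N : ℝ) := by exact_mod_cast hN
  refine ⟨?_, ?_, ?_⟩
  · intro ω hpos hsum
    rw [expand_sum N hN ω hsum]
    have h1 : ∑ i, (ω i) ^ 2 ≤ ∑ i, ω i := by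
      apply Finset.sum_le_sum
      intro i _
      have hle1 : ω i ≤ 1 := by
        rw [← hsum]
        exact Finset.single_le_sum (fun j _ => hpos j) (Finset.mem_univ i)
      nlinarith [hpos i]
    linarith [hsum ▸ h1]
  · ext ω
    simp only [Set.mem_setOf_eq, Set.mem_singleton_iff]
    constructor
    · rintro ⟨hsum, hle⟩
      have hle0 : ∑ i, (ω i - 1 / (N : ℝ)) ^ 2 ≤ 0 := by linarith
      have hge0 : (0:ℝ) ≤ ∑ i, (ω i - 1 / (N : ℝ)) ^ 2 :=
        Finset.sum_nonneg fun i _ => sq_nonneg _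
      have heq : ∑ i, (ω i - 1 / (N : ℝ)) ^ 2 = 0 := le_antisymm hle0 hge0
      funext i
      have := (Finset.sum_eq_zero_iff_of_nonneg (fun i _ => sq_nonneg _)).mp heq i
        (Finset.mem_univ i)
      have := pow_eq_zero_iff (n := 2) (by norm_num) |>.mp this
      linarith
    · rintro rfl
      constructor
      · rw [Finset.sum_const, Finset.card_univ, Fintype.card_fin, nsmul_eq_mul]
        field_simp
      · simp
  · intro ω hsum hle i
    by_contra hneg
    push_neg at hneg
    set s := Finset.univ.erase i with hs
    have hcard : (s.card : ℝ) = (N : ℝ) - 1 := by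
      rw [hs, Finset.card_erase_of_mem (Finset.mem_univ i), Finset.card_univ,
        Fintype.card_fin]
      have : 1 ≤ N := by omega
      push_cast [Nat.cast_sub this]
      ring
    have hsum_s : ∑ j ∈ s, (ω j - 1 / (N : ℝ)) = -(ω i - 1 / N) := by
      have htot : ∑ j, (ω j - 1 / (N : ℝ)) = 0 := by
        rw [Finset.sum_sub_distrib, hsum, Finset.sum_const, Finset.card_univ,
          Fintype.card_fin, nsmul_eq_mul]
        field_simp
        ring
      have := Finset.sum_erase_add Finset.univ (fun j => ω j - 1 / (N : ℝ))
        (Finset.mem_univ i)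
      rw [← hs] at this
      linarith [this.symm ▸ htot]
    have hCS : (∑ j ∈ s, (ω j - 1 / (N : ℝ))) ^ 2
        ≤ (s.card : ℝ) * ∑ j ∈ s, (ω j - 1 / (N : ℝ)) ^ 2 :=
      sq_sum_le_card_mul_sum_sq
    rw [hsum_s, hcard, neg_pow] at hCS
    have hsplit : ∑ j, (ω j - 1 / (N : ℝ)) ^ 2
        = (∑ j ∈ s, (ω j - 1 / (N : ℝ)) ^ 2) + (ω i - 1 / N) ^ 2 := by
      rw [hs]
      exact (Finset.sum_erase_add Finset.univ _ (Finset.mem_univ i)).symm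
    have hNm1 : (0:ℝ) < (N : ℝ) - 1 := by linarith
    have hkey : (ω i - 1 / N) ^ 2 * ((N:ℝ) / ((N:ℝ) - 1)) ≤ ∑ j, (ω j - 1 / (N : ℝ)) ^ 2 := by
      rw [hsplit]
      have h2 : (ω i - 1 / N) ^ 2 / ((N:ℝ) - 1) ≤ ∑ j ∈ s, (ω j - 1 / (N : ℝ)) ^ 2 := by
        rw [div_le_iff₀ hNm1] at *
        nlinarith
      have : (ω i - 1 / N) ^ 2 * ((N:ℝ) / ((N:ℝ) - 1))
          = (ω i - 1 / N) ^ 2 / ((N:ℝ) - 1) + (ω i - 1 / N) ^ 2 := by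
        field_simp; ring
      linarith
    have hsq : (1 / (N:ℝ)) ^ 2 < (ω i - 1 / N) ^ 2 := by
      have h1 : (0:ℝ) < 1 / N := by positivity
      nlinarith
    have hNpos : (0:ℝ) < (N:ℝ) := by linarith
    have hfrac : (1 / ((N : ℝ) - 1) - 1 / N) = (1/(N:ℝ))^2 * ((N:ℝ) / ((N:ℝ)-1)) := by
      field_simp; ring
    have : (1/(N:ℝ))^2 * ((N:ℝ) / ((N:ℝ)-1)) < (ω i - 1 / N) ^ 2 * ((N:ℝ) / ((N:ℝ) - 1)) := by
      apply mul_lt_mul_of_pos_right hsq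
      positivity
    linarith [hfrac ▸ hle]
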